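/- Let p ≥ 2, let V : ℤ → ℝ be periodic with period p, let k ∈ ℝ and l ∈ ℤ, and let A_l^k be the p×p complex matrix with diagonal entries V(l), V(l+1), …, V(l+p−1), entries 1 on the first sub- and superdiagonal, entry e^{−ikp} in the upper-right corner, entry e^{ikp} in the lower-left corner, and all other entries 0. Then for every E ∈ ℝ, det(E·I − A_l^k) = Δ(E) − 2cos(kp), where Δ is the discriminant of V. -/

import Mathlib

/-- The transfer matrix over `n` sites: `T_n^{(E,V)} = S_{n-1} ⋯ S_0`, where
`S_i^{(E,V)} = !![E - V i, -1; 1, 0]`. -/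
def transferMatrix (E : ℝ) (V : ℤ → ℝ) : ℕ → Matrix (Fin 2) (Fin 2) ℝ
  | 0 => 1
  | n + 1 => !![E - V n, -1; 1, 0] * transferMatrix E V n

/-- The discriminant `Δ(E) = tr T_p^{(E,V)}` of a `p`-periodic potential. -/
def discriminant (V : ℤ → ℝ) (p : ℕ) (E : ℝ) : ℝ :=
  (transferMatrix E V p).trace

open Matrix


/-- Entry function of the tridiagonal matrix with diagonal `d` and `-1` off-diagonals. -/
def triE (d : ℕ → ℂ) (i j : ℕ) : ℂ :=
  if i = j then d i else if i + 1 = j ∨ j + 1 = i then -1 else 0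

/-- Determinant sequence of tridiagonal matrices. -/
def Dseq (d : ℕ → ℂ) : ℕ → ℂ
  | 0 => 1
  | 1 => d 0
  | n + 2 => d (n + 1) * Dseq d (n + 1) - Dseq d n

lemma sumTri (d : ℕ → ℂ) (n : ℕ) :
    (∑ j : Fin (n + 1), triE d n (j : ℕ) * Dseq d (j : ℕ)) = Dseq d (n + 1) := by
  cases n with
  | zero => simp [triE, Dseq]
  | succ m =>
    rw [Fin.sum_univ_castSucc, Fin.sum_univ_castSucc]
    have h0 : (∑ j : Fin m, triE d (m + 1) ((j.castSucc.castSucc : Fin (m+2)) : ℕ)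
        * Dseq d ((j.castSucc.castSucc : Fin (m+2)) : ℕ)) = 0 := by
      apply Finset.sum_eq_zero
      intro j _
      have hj : (j : ℕ) < m := j.isLt
      have : triE d (m + 1) (j : ℕ) = 0 := by
        unfold triE
        split_ifs with h1 h2
        · omega
        · omega
        · rfl
      simp [this]
    rw [h0]
    have h1 : ((Fin.last m).castSucc : Fin (m+2)) = ⟨m, by omega⟩ := rfl
    have h2 : triE d (m + 1) m = -1 := by
      unfold triE
      split_ifs with hh1 hh2
      · omega
      · rfl
      · omega
    have h3 : triE d (m + 1) (m + 1) = d (m + 1) := by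
      unfold triE; simp
    simp only [h1, Fin.val_last, Fin.val_mk, h2, h3]
    show 0 + -1 * Dseq d m + d (m + 1) * Dseq d (m + 1) = Dseq d (m + 2)
    show 0 + -1 * Dseq d m + d (m + 1) * Dseq d (m + 1)
      = d (m + 1) * Dseq d (m + 1) - Dseq d m
    ring

/-- Expansion along a column with a single nonzero entry. -/
lemma det_single_col {n : ℕ} (A : Matrix (Fin (n + 1)) (Fin (n + 1)) ℂ)
    (i0 j0 : Fin (n + 1)) (h : ∀ i, i ≠ i0 → A i j0 = 0) :
    A.det = (-1) ^ ((i0 : ℕ) + (j0 : ℕ)) * A i0 j0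
      * (A.submatrix i0.succAbove j0.succAbove).det := by
  rw [Matrix.det_succ_column A j0]
  rw [Finset.sum_eq_single i0]
  · intro b _ hb
    rw [h b hb]; ring
  · intro hb; exact absurd (Finset.mem_univ i0) hb

/-- Determinant of a matrix whose first `n` rows are tridiagonal and whose
last row is arbitrary. -/
lemma det_tri_lastrow (d : ℕ → ℂ) : ∀ (n : ℕ) (w : Fin (n + 1) → ℂ),
    (Matrix.of fun i j : Fin (n + 1) =>
        if (i : ℕ) = n then w j else triE d i j).det
      = ∑ j : Fin (n + 1), w j * Dseq d (j : ℕ) := by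
  intro n
  induction n with
  | zero =>
    intro w
    rw [Matrix.det_fin_one]
    simp [Dseq]
  | succ n ih =>
    intro w
    set B : Matrix (Fin (n + 2)) (Fin (n + 2)) ℂ :=
      Matrix.of fun i j : Fin (n + 2) =>
        if (i : ℕ) = n + 1 then w j else triE d i j with hB
    show B.det = _
    rw [Matrix.det_succ_column B (Fin.last (n + 1))]
    have key : ∀ i : Fin (n + 2), i ≠ ⟨n, by omega⟩ → i ≠ Fin.last (n + 1) →
        B i (Fin.last (n + 1)) = 0 := by
      intro i h1 h2
      have hv1 : (i : ℕ) ≠ n := fun h => h1 (Fin.ext h)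
      have hv2 : (i : ℕ) ≠ n + 1 := fun h => h2 (Fin.ext h)
      simp only [hB, Matrix.of_apply, if_neg hv2]
      unfold triE
      simp only [Fin.val_last]
      split_ifs with g1 g2
      · omega
      · omega
      · rfl
    set F : Fin (n + 2) → ℂ := fun i =>
      (-1) ^ ((i : ℕ) + ((Fin.last (n+1) : Fin (n+2)) : ℕ)) * B i (Fin.last (n + 1))
        * (B.submatrix i.succAbove (Fin.last (n + 1)).succAbove).det with hF
    have hne : (⟨n, by omega⟩ : Fin (n+2)) ≠ Fin.last (n + 1) := by
      intro h
      have := congrArg Fin.val h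
      simp at this
    have hsum : ∑ i : Fin (n + 2), F i = F ⟨n, by omega⟩ + F (Fin.last (n+1)) := by
      rw [← Finset.sum_pair hne]
      apply (Finset.sum_subset (Finset.subset_univ _) _).symm
      intro i _ hi
      simp only [Finset.mem_insert, Finset.mem_singleton] at hi
      push_neg at hi
      rw [hF]
      simp only []
      rw [key i hi.1 hi.2]
      ring
    rw [hsum, hF]
    simp only []
    -- first minor: rows 0..n tridiagonal with row n replaced by w ∘ castSucc
    have m1 : B.submatrix (⟨n, by omega⟩ : Fin (n+2)).succAbove (Fin.last (n + 1)).succAbove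
        = Matrix.of fun i j : Fin (n + 1) =>
            if (i : ℕ) = n then w j.castSucc else triE d i j := by
      ext i j
      simp only [Matrix.submatrix_apply, Fin.succAbove_last, Matrix.of_apply, hB]
      by_cases hi : (i : ℕ) = n
      · have : (⟨n, by omega⟩ : Fin (n+2)).succAbove i = Fin.last (n + 1) := by
          rw [Fin.succAbove_of_le_castSucc]
          · apply Fin.ext; simp [hi]
          · apply Fin.le_def.mpr; simp [hi]
        rw [this]
        simp [hi]
      · have hlt : (i : ℕ) < n := by omega
        have : (⟨n, by omega⟩ : Fin (n+2)).succAbove i = i.castSucc := by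
          rw [Fin.succAbove_of_castSucc_lt]
          apply Fin.lt_def.mpr; simp [hlt]
        rw [this]
        have : ((i.castSucc : Fin (n+2)) : ℕ) = (i : ℕ) := rfl
        simp only [this, if_neg (by omega : ¬ (i:ℕ) = n + 1), if_neg hi]
        rfl
    -- second minor: pure tridiagonal, i.e. last row = tri row n
    have m2 : B.submatrix (Fin.last (n+1)).succAbove (Fin.last (n + 1)).succAbove
        = Matrix.of fun i j : Fin (n + 1) =>
            if (i : ℕ) = n then triE d n j else triE d i j := by
      ext i j
      simp only [Matrix.submatrix_apply, Fin.succAbove_last, Matrix.of_apply, hB]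
      have : ((i.castSucc : Fin (n+2)) : ℕ) = (i : ℕ) := rfl
      simp only [this, if_neg (by omega : ¬ (i:ℕ) = n + 1)]
      by_cases hi : (i : ℕ) = n
      · rw [if_pos hi, hi]; rfl
      · rw [if_neg hi]; rfl
    rw [m1, m2, ih, ih]
    have e1 : B ⟨n, by omega⟩ (Fin.last (n + 1)) = -1 := by
      simp only [hB, Matrix.of_apply, Fin.val_last]
      rw [if_neg (by simp)]
      unfold triE
      rw [if_neg (by omega), if_pos (by omega)]
    have e2 : B (Fin.last (n+1)) (Fin.last (n + 1)) = w (Fin.last (n+1)) := by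
      simp [hB]
    rw [e1, e2]
    have e3 : (∑ j : Fin (n+1), triE d n (j:ℕ) * Dseq d (j:ℕ)) = Dseq d (n + 1) :=
      sumTri d n
    rw [e3]
    have e4 : ((-1 : ℂ)) ^ (((⟨n, by omega⟩ : Fin (n+2)) : ℕ) + ((Fin.last (n+1) : Fin (n+2)) : ℕ))
        = (-1) ^ (2 * n + 1) := by
      simp only [Fin.val_last, Fin.val_mk]
      rw [show n + (n + 1) = 2 * n + 1 by omega]
    have e5 : ((-1 : ℂ)) ^ (((Fin.last (n+1) : Fin (n+2)) : ℕ) + ((Fin.last (n+1) : Fin (n+2)) : ℕ))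
        = 1 := by
      simp only [Fin.val_last]
      rw [← two_mul, pow_mul]
      norm_num
    rw [e4, e5]
    rw [Fin.sum_univ_castSucc (f := fun j : Fin (n+2) => w j * Dseq d (j : ℕ))]
    have : ((-1 : ℂ)) ^ (2 * n + 1) = -1 := by
      rw [pow_succ, pow_mul]; norm_num
    rw [this]
    simp only [Fin.coe_castSucc, Fin.val_last]
    ring

/-- Determinant of the pure tridiagonal matrix. -/
lemma det_triMat (d : ℕ → ℂ) (n : ℕ) :
    (Matrix.of fun i j : Fin n => triE d i j).det = Dseq d n := by
  cases n with
  | zero => simp [Dseq]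
  | succ m =>
    have h : (Matrix.of fun i j : Fin (m+1) => triE d i j)
        = Matrix.of fun i j : Fin (m+1) =>
            if (i : ℕ) = m then (fun j : Fin (m+1) => triE d m (j : ℕ)) j else triE d i j := by
      ext i j
      simp only [Matrix.of_apply]
      by_cases hi : (i : ℕ) = m
      · rw [if_pos hi, hi]
      · rw [if_neg hi]
    rw [h, det_tri_lastrow d m, sumTri]

noncomputable def TcM (d : ℕ → ℂ) : ℕ → Matrix (Fin 2) (Fin 2) ℂ
  | 0 => 1
  | n + 1 => !![d n, -1; 1, 0] * TcM d n

def Eseq (d : ℕ → ℂ) : ℕ → ℂ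
  | 0 => 0
  | n + 1 => - Dseq (fun t => d (t + 1)) n

lemma TcM_succ (d : ℕ → ℂ) : ∀ n : ℕ,
    TcM d (n + 1) = !![Dseq d (n + 1), - Dseq (fun t => d (t + 1)) n; Dseq d n, Eseq d n] := by
  intro n
  induction n with
  | zero =>
    rw [show TcM d 1 = !![d 0, -1; 1, 0] * TcM d 0 from rfl,
      show TcM d 0 = 1 from rfl, mul_one]
    congr 1 <;> simp [Dseq, Eseq]
  | succ n ih =>
    rw [show TcM d (n + 1 + 1) = !![d (n+1), -1; 1, 0] * TcM d (n + 1) from rfl,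
      ih, Matrix.mul_fin_two]
    have h00 : d (n+1) * Dseq d (n+1) + -1 * Dseq d n = Dseq d (n + 2) := by
      show _ = d (n + 1) * Dseq d (n + 1) - Dseq d n; ring
    have h01 : d (n+1) * (- Dseq (fun t => d (t+1)) n) + -1 * Eseq d n
        = - Dseq (fun t => d (t + 1)) (n + 1) := by
      cases n with
      | zero =>
        simp [Dseq, Eseq]
      | succ t =>
        show d (t+2) * (- Dseq (fun s => d (s+1)) (t+1)) + -1 * (- Dseq (fun s => d (s+1)) t)
          = - Dseq (fun s => d (s+1)) (t+2)
        show _ = -((fun s => d (s+1)) (t+1) * Dseq (fun s => d (s+1)) (t+1)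
          - Dseq (fun s => d (s+1)) t)
        simp only []
        ring
    have h10 : 1 * Dseq d (n+1) + 0 * Dseq d n = Dseq d (n + 1) := by ring
    have h11 : 1 * (- Dseq (fun t => d (t+1)) n) + 0 * Eseq d n = Eseq d (n + 1) := by
      show _ = - Dseq (fun t => d (t + 1)) n; ring
    rw [h00, h01, h10, h11]

lemma trace_TcM (d : ℕ → ℂ) (m : ℕ) :
    (TcM d (m + 2)).trace = Dseq d (m + 2) - Dseq (fun t => d (t + 1)) m := by
  rw [TcM_succ d (m + 1), Matrix.trace_fin_two]
  show Dseq d (m + 2) + Eseq d (m + 1) = _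
  show Dseq d (m + 2) + - Dseq (fun t => d (t + 1)) m = _
  ring

lemma TcM_map (E : ℝ) (W : ℤ → ℝ) : ∀ n : ℕ,
    TcM (fun t => (E : ℂ) - (W t : ℂ)) n = (transferMatrix E W n).map Complex.ofRealHom := by
  intro n
  induction n with
  | zero =>
    rw [show TcM (fun t => (E : ℂ) - (W t : ℂ)) 0 = 1 from rfl,
      show transferMatrix E W 0 = 1 from rfl,
      Matrix.map_one _ (map_zero _) (map_one _)]
  | succ n ih =>
    rw [show TcM (fun t => (E : ℂ) - (W t : ℂ)) (n+1)
        = !![(E : ℂ) - (W n : ℂ), -1; 1, 0] * TcM (fun t => (E : ℂ) - (W t : ℂ)) n from rfl,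
      show transferMatrix E W (n+1) = !![E - W n, -1; 1, 0] * transferMatrix E W n from rfl,
      Matrix.map_mul, ih]
    congr 1
    ext i j
    fin_cases i <;> fin_cases j <;> simp

lemma transfer_shift_prod (E : ℝ) (W : ℤ → ℝ) : ∀ n : ℕ,
    transferMatrix E W (n + 1)
      = transferMatrix E (fun t => W (1 + t)) n * !![E - W 0, -1; 1, 0] := by
  intro n
  induction n with
  | zero =>
    rw [show transferMatrix E W 1 = !![E - W 0, -1; 1, 0] * transferMatrix E W 0 from rfl,
      show transferMatrix E W 0 = 1 from rfl,
      show transferMatrix E (fun t => W (1 + t)) 0 = 1 from rfl, mul_one, one_mul]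
  | succ n ih =>
    rw [show transferMatrix E W (n + 1 + 1)
        = !![E - W (n+1), -1; 1, 0] * transferMatrix E W (n + 1) from rfl,
      ih,
      show transferMatrix E (fun t => W (1 + t)) (n + 1)
        = !![E - (fun t : ℤ => W (1 + t)) n, -1; 1, 0]
          * transferMatrix E (fun t => W (1 + t)) n from rfl]
    rw [← Matrix.mul_assoc]
    congr 2
    simp only []
    congr 2
    push_cast
    ring_nf

lemma trace_shift_one (E : ℝ) (p : ℕ) (hp : 1 ≤ p) (W : ℤ → ℝ)
    (hW : ∀ t : ℤ, W (t + p) = W t) :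
    (transferMatrix E W p).trace = (transferMatrix E (fun t => W (1 + t)) p).trace := by
  obtain ⟨q, rfl⟩ : ∃ q, p = q + 1 := ⟨p - 1, by omega⟩
  rw [transfer_shift_prod E W q, Matrix.trace_mul_comm]
  rw [show transferMatrix E (fun t => W (1 + t)) (q + 1)
      = !![E - (fun t : ℤ => W (1 + t)) q, -1; 1, 0]
        * transferMatrix E (fun t => W (1 + t)) q from rfl]
  congr 2
  simp only []
  congr 2
  have : (1 : ℤ) + (q : ℤ) = 0 + ((q : ℕ) + 1 : ℕ) := by push_cast; ring
  rw [this, hW 0]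

lemma trace_shift (E : ℝ) (p : ℕ) (hp : 1 ≤ p) (V : ℤ → ℝ)
    (hV : ∀ t : ℤ, V (t + p) = V t) (l : ℤ) :
    (transferMatrix E (fun t => V (l + t)) p).trace = (transferMatrix E V p).trace := by
  have key : ∀ l : ℤ, (transferMatrix E (fun t => V (l + t)) p).trace
      = (transferMatrix E (fun t => V ((l + 1) + t)) p).trace := by
    intro l
    have hper : ∀ t : ℤ, (fun t : ℤ => V (l + t)) (t + p) = V (l + t) := by
      intro t
      show V (l + (t + p)) = _
      rw [show l + (t + p) = (l + t) + p by ring, hV]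
    rw [trace_shift_one E p hp (fun t => V (l + t)) hper]
    have hfe : (fun t : ℤ => (fun s : ℤ => V (l + s)) (1 + t)) = fun t : ℤ => V ((l + 1) + t) := by
      funext t
      show V (l + (1 + t)) = V ((l + 1) + t)
      congr 1
      ring
    rw [hfe]
  have base : (fun t : ℤ => V ((0 : ℤ) + t)) = V := by funext t; rw [zero_add]
  have main : ∀ l : ℤ, (transferMatrix E (fun t => V (l + t)) p).trace
      = (transferMatrix E (fun t => V ((0:ℤ) + t)) p).trace := by
    intro l
    induction l using Int.induction_on with
    | zero => rfl
    | succ n ih => rw [← key n]; exact ih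
    | pred n ih =>
      have h2 := key (-(n:ℤ) - 1)
      rw [show -(n:ℤ) - 1 + 1 = -(n:ℤ) by ring] at h2
      rw [h2]
      exact ih
  rw [main l, base]

lemma triE_shift (d : ℕ → ℂ) (i j : ℕ) :
    triE d (i + 1) (j + 1) = triE (fun t => d (t + 1)) i j := by
  unfold triE
  rcases eq_or_ne i j with rfl | hne
  · simp
  · rw [if_neg (by omega), if_neg hne]
    by_cases h : i + 1 = j ∨ j + 1 = i
    · rw [if_pos (by omega), if_pos h]
    · rw [if_neg (by omega), if_neg h]


set_option maxHeartbeats 1600000 in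
/-- For `p ≥ 2`, a `p`-periodic `V : ℤ → ℝ`, `k ∈ ℝ`, `l ∈ ℤ`,
let `A_l^k` be the `p × p` complex matrix with diagonal entries
`V(l), …, V(l+p-1)`, entries `1` on the first sub- and superdiagonal, entry
`e^{-ikp}` in the upper-right corner and `e^{ikp}` in the lower-left corner
(entries on overlapping positions being added), and all other entries `0`.
Then `det(E·I - A_l^k) = Δ(E) - 2 cos(kp)` for every `E ∈ ℝ`, where `Δ` is the
discriminant of `V`. -/
theorem statement12
    (p : ℕ) (hp : 2 ≤ p) (V : ℤ → ℝ) (hV : ∀ n : ℤ, V (n + p) = V n)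
    (k : ℝ) (l : ℤ) (A : Matrix (Fin p) (Fin p) ℂ)
    (hA : ∀ i j : Fin p,
      A i j = (if i = j then (V (l + (i : ℕ)) : ℂ) else 0)
        + (if (i : ℕ) + 1 = (j : ℕ) then 1 else 0)
        + (if (j : ℕ) + 1 = (i : ℕ) then 1 else 0)
        + (if (i : ℕ) = 0 ∧ (j : ℕ) = p - 1 then
            Complex.exp (-(Complex.I * k * p)) else 0)
        + (if (j : ℕ) = 0 ∧ (i : ℕ) = p - 1 then
            Complex.exp (Complex.I * k * p) else 0))
    (E : ℝ) :
    ((E : ℂ) • (1 : Matrix (Fin p) (Fin p) ℂ) - A).det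
      = (discriminant V p E : ℂ) - 2 * Real.cos (k * p) := by
  obtain ⟨m, rfl⟩ : ∃ m, p = m + 2 := ⟨p - 2, by omega⟩
  set d : ℕ → ℂ := fun n => (E : ℂ) - (V (l + (n : ℕ)) : ℂ) with hd
  set α : ℂ := Complex.exp (-(Complex.I * k * ((m + 2 : ℕ) : ℂ))) with hα
  set β : ℂ := Complex.exp (Complex.I * k * ((m + 2 : ℕ) : ℂ)) with hβ
  set T : Matrix (Fin (m + 2)) (Fin (m + 2)) ℂ :=
    Matrix.of fun i j : Fin (m + 2) => triE d i j with hT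
  set δ0 : Fin (m + 2) → ℂ := fun i => if (i : ℕ) = 0 then 1 else 0 with hδ0
  set δl : Fin (m + 2) → ℂ := fun i => if (i : ℕ) = m + 1 then 1 else 0 with hδl
  set u : Fin (m + 2) → ℂ := fun i => triE d i (m + 1) + (-α) * δ0 i with hu
  set v : Fin (m + 2) → ℂ := fun i => triE d i 0 + (-β) * δl i with hv
  have hlast0 : (Fin.last (m + 1) : Fin (m + 2)) ≠ 0 := by
    intro h; have := congrArg Fin.val h; simp [Fin.val_last] at this
  -- Step A : identification of the matrix
  have hM : (E : ℂ) • (1 : Matrix (Fin (m+2)) (Fin (m+2)) ℂ) - A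
      = updateCol (updateCol T (Fin.last (m + 1)) u) 0 v := by
    ext i j
    rw [Matrix.sub_apply, Matrix.smul_apply, Matrix.one_apply, hA i j]
    rw [Matrix.updateCol_apply, Matrix.updateCol_apply]
    have hj0 : (j = (0 : Fin (m+2))) ↔ (j : ℕ) = 0 := by
      constructor
      · intro h; rw [h]; rfl
      · intro h; exact Fin.ext h
    have hjl : (j = Fin.last (m + 1)) ↔ (j : ℕ) = m + 1 := by
      constructor
      · intro h; rw [h]; rfl
      · intro h; exact Fin.ext h
    by_cases hj0' : (j : ℕ) = 0
    · rw [if_pos (hj0.mpr hj0'), hv]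
      simp only [hδl, hd, Fin.ext_iff, Fin.val_zero, hj0',
        show m + 2 - 1 = m + 1 from rfl]
      unfold triE
      rw [smul_eq_mul]
      beta_reduce
      split_ifs <;> first | ring1 | omega | (exfalso; omega) | tauto
    · rw [if_neg (fun h => hj0' (hj0.mp h))]
      by_cases hjl' : (j : ℕ) = m + 1
      · rw [if_pos (hjl.mpr hjl'), hu]
        simp only [hδ0, hd, Fin.ext_iff, Fin.val_zero, hjl',
          show m + 2 - 1 = m + 1 from rfl]
        unfold triE
        rw [smul_eq_mul]
        beta_reduce
        split_ifs <;> first | ring1 | omega | (exfalso; omega) | tauto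
      · rw [if_neg (fun h => hjl' (hjl.mp h)), hT]
        simp only [Matrix.of_apply, hd, Fin.ext_iff, Fin.val_zero,
          show m + 2 - 1 = m + 1 from rfl]
        unfold triE
        rw [smul_eq_mul]
        beta_reduce
        split_ifs <;> first | ring1 | omega | (exfalso; omega) | tauto
  -- abbreviations for the four special matrices
  set M2 : Matrix (Fin (m+2)) (Fin (m+2)) ℂ := updateCol T (Fin.last (m+1)) δ0 with hM2
  set M3 : Matrix (Fin (m+2)) (Fin (m+2)) ℂ := updateCol T 0 δl with hM3
  set M4 : Matrix (Fin (m+2)) (Fin (m+2)) ℂ := updateCol M3 (Fin.last (m+1)) δ0 with hM4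
  -- Step B : multilinearity split
  have hsplit : ((E : ℂ) • (1 : Matrix (Fin (m+2)) (Fin (m+2)) ℂ) - A).det
      = T.det + (-α) * M2.det + (-β) * (M3.det + (-α) * M4.det) := by
    rw [hM]
    set N : Matrix (Fin (m+2)) (Fin (m+2)) ℂ := updateCol T (Fin.last (m+1)) u with hN
    have hv' : v = (fun i => N i 0) + (-β) • δl := by
      funext i
      rw [hv, hN]
      simp only [Pi.add_apply, Pi.smul_apply, smul_eq_mul]
      rw [Matrix.updateCol_ne (Ne.symm hlast0), hT]
      rfl
    rw [hv', Matrix.det_updateCol_add N 0 (fun i => N i 0) ((-β) • δl)]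

    have h1 : updateCol N 0 (fun i => N i 0) = N := Matrix.updateCol_eq_self N 0
    rw [h1, Matrix.det_updateCol_smul]
    -- N in terms of T and M2
    have hu' : u = (fun i => T i (Fin.last (m+1))) + (-α) • δ0 := by
      funext i
      rw [hu, hT]
      simp only [Pi.add_apply, Pi.smul_apply, smul_eq_mul, Matrix.of_apply]
      rfl
    have hdetN : N.det = T.det + (-α) * M2.det := by
      rw [hN, hu', Matrix.det_updateCol_add T (Fin.last (m+1)) _ ((-α) • δ0),
        Matrix.updateCol_eq_self T (Fin.last (m+1)), Matrix.det_updateCol_smul, hM2]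
    -- commute the two updates
    have hcomm : updateCol N 0 δl = updateCol M3 (Fin.last (m+1)) u := by
      rw [hN, hM3]
      ext i j
      rw [Matrix.updateCol_apply, Matrix.updateCol_apply,
        Matrix.updateCol_apply, Matrix.updateCol_apply]
      by_cases hja : j = 0
      · rw [if_pos hja, if_neg (by rw [hja]; exact Ne.symm hlast0), if_pos hja]
      · rw [if_neg hja]
        by_cases hjb : j = Fin.last (m+1)
        · rw [if_pos hjb, if_pos hjb]
        · rw [if_neg hjb, if_neg hjb, if_neg hja]
    have hdetN2 : (updateCol N 0 δl).det = M3.det + (-α) * M4.det := by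
      rw [hcomm]
      have hu'' : u = (fun i => M3 i (Fin.last (m+1))) + (-α) • δ0 := by
        funext i
        rw [hu]
        simp only [Pi.add_apply, Pi.smul_apply, smul_eq_mul]
        rw [hM3, Matrix.updateCol_ne hlast0, hT]
        rfl
      rw [hu'', Matrix.det_updateCol_add M3 (Fin.last (m+1)) _ ((-α) • δ0),
        Matrix.updateCol_eq_self M3 (Fin.last (m+1)), Matrix.det_updateCol_smul, hM4]
    rw [hdetN, hdetN2]
  -- Step C : evaluation of the four determinants
  have hdetT : T.det = Dseq d (m + 2) := det_triMat d (m + 2)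
  have hzl : ((0 : Fin (m+2)) : ℕ) = 0 := rfl
  have hll : ((Fin.last (m+1) : Fin (m+2)) : ℕ) = m + 1 := rfl
  have hpow : ((-1 : ℂ)) ^ (m + 1) * ((-1 : ℂ)) ^ (m + 1) = 1 := by
    rw [← mul_pow]; norm_num
  have hδ0c : ∀ i : Fin (m+2), i ≠ 0 → δ0 i = 0 := by
    intro i hi
    rw [hδ0]
    exact if_neg (fun h => hi (Fin.ext h))
  have hδlc : ∀ i : Fin (m+2), i ≠ Fin.last (m+1) → δl i = 0 := by
    intro i hi
    rw [hδl]
    refine if_neg (fun h => hi (Fin.ext ?_))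
    rw [h]; rfl
  have hdet2 : M2.det = 1 := by
    have hc : ∀ i : Fin (m+2), i ≠ 0 → M2 i (Fin.last (m+1)) = 0 := by
      intro i hi
      rw [hM2, Matrix.updateCol_self]
      exact hδ0c i hi
    rw [det_single_col M2 0 (Fin.last (m+1)) hc]
    have h00 : M2 0 (Fin.last (m+1)) = 1 := by
      rw [hM2, Matrix.updateCol_self]
      simp [hδ0]
    have hsub : M2.submatrix (Fin.succAbove 0) (Fin.succAbove (Fin.last (m+1)))
        = Matrix.of fun i j : Fin (m+1) => triE d ((i : ℕ) + 1) (j : ℕ) := by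
      ext i j
      rw [Matrix.submatrix_apply, Fin.succAbove_zero, Fin.succAbove_last, hM2,
        Matrix.updateCol_ne (Fin.castSucc_lt_last j).ne, hT]
      rfl
    rw [hsub]
    have htri : (Matrix.of fun i j : Fin (m+1) => triE d ((i : ℕ) + 1) (j : ℕ)).det
        = ∏ i : Fin (m+1), triE d ((i : ℕ) + 1) (i : ℕ) := by
      apply Matrix.det_of_upperTriangular
      intro i j hij
      have : (j : ℕ) < (i : ℕ) := hij
      show triE d ((i : ℕ) + 1) (j : ℕ) = 0
      unfold triE
      rw [if_neg (by omega), if_neg (by omega)]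
    rw [htri]
    have hdiag : ∀ i : Fin (m+1), triE d ((i : ℕ) + 1) (i : ℕ) = -1 := by
      intro i
      unfold triE
      rw [if_neg (by omega), if_pos (by omega)]
    rw [Finset.prod_congr rfl (fun i _ => hdiag i), Finset.prod_const,
      Finset.card_univ, Fintype.card_fin]
    rw [hzl, hll, h00, zero_add, mul_one, hpow]
  have hdet3 : M3.det = 1 := by
    have hc : ∀ i : Fin (m+2), i ≠ Fin.last (m+1) → M3 i 0 = 0 := by
      intro i hi
      rw [hM3, Matrix.updateCol_self]
      exact hδlc i hi
    rw [det_single_col M3 (Fin.last (m+1)) 0 hc]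
    have h00 : M3 (Fin.last (m+1)) 0 = 1 := by
      rw [hM3, Matrix.updateCol_self]
      simp [hδl]
    have hsub : M3.submatrix (Fin.succAbove (Fin.last (m+1))) (Fin.succAbove 0)
        = Matrix.of fun i j : Fin (m+1) => triE d (i : ℕ) ((j : ℕ) + 1) := by
      ext i j
      rw [Matrix.submatrix_apply, Fin.succAbove_zero, Fin.succAbove_last, hM3,
        Matrix.updateCol_ne (Fin.succ_ne_zero j), hT]
      rfl
    rw [hsub]
    have htri : (Matrix.of fun i j : Fin (m+1) => triE d (i : ℕ) ((j : ℕ) + 1)).det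
        = ∏ i : Fin (m+1), triE d (i : ℕ) ((i : ℕ) + 1) := by
      apply Matrix.det_of_lowerTriangular
      intro i j hij
      have : (i : ℕ) < (j : ℕ) := hij
      show triE d (i : ℕ) ((j : ℕ) + 1) = 0
      unfold triE
      rw [if_neg (by omega), if_neg (by omega)]
    rw [htri]
    have hdiag : ∀ i : Fin (m+1), triE d (i : ℕ) ((i : ℕ) + 1) = -1 := by
      intro i
      unfold triE
      rw [if_neg (by omega), if_pos (by omega)]
    rw [Finset.prod_congr rfl (fun i _ => hdiag i), Finset.prod_const,
      Finset.card_univ, Fintype.card_fin]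
    rw [hzl, hll, h00, add_zero, mul_one, hpow]
  have hdet4 : M4.det = - Dseq (fun t => d (t + 1)) m := by
    have hc : ∀ i : Fin (m+2), i ≠ 0 → M4 i (Fin.last (m+1)) = 0 := by
      intro i hi
      rw [hM4, Matrix.updateCol_self]
      exact hδ0c i hi
    rw [det_single_col M4 0 (Fin.last (m+1)) hc]
    have h00 : M4 0 (Fin.last (m+1)) = 1 := by
      rw [hM4, Matrix.updateCol_self]
      simp [hδ0]
    set S1 : Matrix (Fin (m+1)) (Fin (m+1)) ℂ :=
      M4.submatrix (Fin.succAbove 0) (Fin.succAbove (Fin.last (m+1))) with hS1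
    have hc1 : ∀ i : Fin (m+1), i ≠ Fin.last m → S1 i 0 = 0 := by
      intro i hi
      rw [hS1, Matrix.submatrix_apply, Fin.succAbove_zero, Fin.succAbove_last, hM4,
        Matrix.updateCol_ne (Fin.castSucc_lt_last (0 : Fin (m+1))).ne, hM3]
      have h0 : ((0 : Fin (m+1)).castSucc : Fin (m+2)) = 0 := rfl
      rw [h0, Matrix.updateCol_self]
      apply hδlc
      intro h
      apply hi
      apply Fin.ext
      have := congrArg Fin.val h
      simpa using this
    rw [det_single_col S1 (Fin.last m) 0 hc1]
    have h11 : S1 (Fin.last m) 0 = 1 := by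
      rw [hS1, Matrix.submatrix_apply, Fin.succAbove_zero, Fin.succAbove_last, hM4,
        Matrix.updateCol_ne (Fin.castSucc_lt_last (0 : Fin (m+1))).ne, hM3]
      have h0 : ((0 : Fin (m+1)).castSucc : Fin (m+2)) = 0 := rfl
      rw [h0, Matrix.updateCol_self]
      simp [hδl]
    have hsub2 : S1.submatrix (Fin.succAbove (Fin.last m)) (Fin.succAbove 0)
        = Matrix.of fun i j : Fin m => triE (fun t => d (t + 1)) (i : ℕ) (j : ℕ) := by
      ext i j
      rw [Matrix.submatrix_apply, Fin.succAbove_zero, Fin.succAbove_last, hS1,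
        Matrix.submatrix_apply, Fin.succAbove_zero, Fin.succAbove_last, hM4]
      have hcol : ((j.succ : Fin (m+1)).castSucc : Fin (m+2)) ≠ Fin.last (m+1) :=
        (Fin.castSucc_lt_last _).ne
      rw [Matrix.updateCol_ne hcol, hM3]
      have hcol0 : ((j.succ : Fin (m+1)).castSucc : Fin (m+2)) ≠ 0 := by
        intro h
        have := congrArg Fin.val h
        simp at this
      rw [Matrix.updateCol_ne hcol0, hT]
      show triE d ((i.castSucc.succ : Fin (m+2)) : ℕ) ((j.succ.castSucc : Fin (m+2)) : ℕ)
        = triE (fun t => d (t + 1)) (i : ℕ) (j : ℕ)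
      have hr : ((i.castSucc.succ : Fin (m+2)) : ℕ) = (i : ℕ) + 1 := rfl
      have hcc : ((j.succ.castSucc : Fin (m+2)) : ℕ) = (j : ℕ) + 1 := rfl
      rw [hr, hcc, triE_shift]
    rw [hsub2, det_triMat (fun t => d (t + 1)) m]
    rw [hzl, hll, h00, h11, zero_add, mul_one, mul_one]
    have hv1 : ((Fin.last m : Fin (m+1)) : ℕ) = m := rfl
    have hv0 : ((0 : Fin (m+1)) : ℕ) = 0 := rfl
    rw [hv1, hv0, add_zero]
    rw [show (-1 : ℂ) ^ (m + 1) * ((-1 : ℂ) ^ m * Dseq (fun t => d (t + 1)) m)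
        = ((-1 : ℂ) ^ (m + 1) * (-1 : ℂ) ^ m) * Dseq (fun t => d (t + 1)) m by ring]
    rw [← pow_add, show m + 1 + m = 2 * m + 1 by ring, pow_succ, pow_mul]
    norm_num
  -- Step D : assembly
  have hαβ : α * β = 1 := by
    rw [hα, hβ, ← Complex.exp_add, neg_add_cancel, Complex.exp_zero]
  have hdetM : ((E : ℂ) • (1 : Matrix (Fin (m+2)) (Fin (m+2)) ℂ) - A).det
      = (Dseq d (m + 2) - Dseq (fun t => d (t + 1)) m) - (α + β) := by
    rw [hsplit, hdetT, hdet2, hdet3, hdet4]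
    linear_combination (-(Dseq (fun t => d (t + 1)) m)) * hαβ
  have htrace : Dseq d (m + 2) - Dseq (fun t => d (t + 1)) m
      = ((discriminant V (m + 2) E : ℝ) : ℂ) := by
    rw [← trace_TcM d m]
    have hdW : d = fun t : ℕ => (E : ℂ) - (((fun s : ℤ => V (l + s)) (t : ℕ) : ℝ) : ℂ) := rfl
    rw [hdW, TcM_map E (fun s => V (l + s)) (m + 2)]
    have hmt : ∀ M : Matrix (Fin 2) (Fin 2) ℝ,
        (M.map Complex.ofRealHom).trace = ((M.trace : ℝ) : ℂ) := by
      intro M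
      rw [Matrix.trace_fin_two, Matrix.trace_fin_two]
      simp [Matrix.map_apply]
    rw [hmt, trace_shift E (m + 2) (by omega) V hV l]
    rfl
  have hcos : α + β = 2 * ((Real.cos (k * ((m + 2 : ℕ) : ℝ)) : ℝ) : ℂ) := by
    rw [Complex.ofReal_cos, Complex.two_cos, hα, hβ]
    have h1 : ((k * ((m + 2 : ℕ) : ℝ) : ℝ) : ℂ) * Complex.I
        = Complex.I * (k : ℂ) * ((m + 2 : ℕ) : ℂ) := by
      push_cast; ring
    rw [h1, show -(((k * ((m + 2 : ℕ) : ℝ) : ℝ)) : ℂ) * Complex.I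
        = -(Complex.I * (k : ℂ) * ((m + 2 : ℕ) : ℂ)) by push_cast; ring]
    ring
  rw [hdetM, htrace, hcos]
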